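/- Let α = a_1…a_r be a reduced word given by its tower decomposition and b a positive integer such that b α is reduced, and let b_0, b_1, …, b_s be the track sequence of b through α. Then every element of passwords(b, α), namely each word a_1…a_i b_i a_{i+1}…a_r for 0 ≤ i ≤ s, is a reduced word representing the same permutation as b α. -/

import Mathlib

/-- The adjacent transposition `sᵢ = (i, i+1)` as a permutation of `ℕ`. -/
def sGen (i : ℕ) : Equiv.Perm ℕ := Equiv.swap i (i + 1)

/-- The permutation represented by a word. -/
def toPerm (w : List ℕ) : Equiv.Perm ℕ := (w.map sGen).prod

/-- A word is reduced (of minimal length among words representing the same permutation). -/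
def IsReducedWord (w : List ℕ) : Prop := ∀ v : List ℕ, toPerm v = toPerm w → w.length ≤ v.length

/-- `w` is a reduced word for the permutation `ω`. -/
def IsReducedWordOf (w : List ℕ) (ω : Equiv.Perm ℕ) : Prop :=
  toPerm w = ω ∧ ∀ v : List ℕ, toPerm v = ω → w.length ≤ v.length

/-- The relation `<₁`: `β` is obtained from `α` by swapping two adjacent letters
`x, y` with `y ≥ x + 2` (the smaller letter moves right). -/
def Rel1 (α β : List ℕ) : Prop :=
  ∃ (p q : List ℕ) (x y : ℕ), x + 2 ≤ y ∧
    α = p ++ x :: y :: q ∧ β = p ++ y :: x :: q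

/-- Lexicographic order (non-strict) on words. -/
def LexLe (α β : List ℕ) : Prop := α = β ∨ List.Lex (· < ·) α β

/-- A tower word: a nonempty increasing run of consecutive integers. -/
def IsTowerWord (a : List ℕ) : Prop := a ≠ [] ∧ a.Chain' (fun x y => y = x + 1)

/-- First letter of a tower word. -/
def inn (a : List ℕ) : ℕ := a.headI

/-- Last letter of a tower word. -/
def fin' (a : List ℕ) : ℕ := a.getLastD 0

/-- `L` is the tower decomposition of `w`: a factorization into maximal tower words. -/
def IsTowerDecomp (w : List ℕ) (L : List (List ℕ)) : Prop :=
  L.flatten = w ∧ (∀ a ∈ L, IsTowerWord a) ∧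
    L.Chain' (fun a b => inn b ≠ fin' a + 1)

/-- The relation `<₂`: a directed long-braid move of a tower word past its left neighbour. -/
def Rel2 (α β : List ℕ) : Prop :=
  ∃ (A B : List (List ℕ)) (a b b1 b2 : List ℕ),
    IsTowerDecomp α (A ++ a :: b :: B) ∧
    inn a ≤ inn b ∧ inn b < fin' b ∧ fin' b < fin' a ∧
    IsTowerWord b1 ∧ (b2 = [] ∨ IsTowerWord b2) ∧ b1 ++ b2 = b ∧
    β = A.flatten ++ (b1.map (· + 1)) ++ a ++ b2 ++ B.flatten

/-- The directed-braid order: reflexive-transitive closure of `<₁ ∪ <₂`. -/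
def DBraid : List ℕ → List ℕ → Prop :=
  Relation.ReflTransGen (fun α β => Rel1 α β ∨ Rel2 α β)

/-- The natural word of `ω`: the reduced word whose tower decomposition has
strictly decreasing initial letters. -/
def IsNaturalWordOf (η : List ℕ) (ω : Equiv.Perm ℕ) : Prop :=
  IsReducedWordOf η ω ∧ ∃ L, IsTowerDecomp η L ∧ L.Chain' (fun a b => inn b < inn a)

/-- A natural basic word of `ω`: a reduced word whose tower decomposition satisfies
`fin(aᵢ) > in(aᵢ₊₁)` for all `i`. -/
def IsNaturalBasicOf (β : List ℕ) (ω : Equiv.Perm ℕ) : Prop :=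
  IsReducedWordOf β ω ∧ ∃ L, IsTowerDecomp β L ∧ L.Chain' (fun a b => inn b < fin' a)

/-- One step of the track of a letter `b` through a tower word `a`. -/
def trackStep (a : List ℕ) (b : ℕ) : Option ℕ :=
  if inn a < b ∧ b ≤ fin' a then some (b - 1)
  else if b + 2 ≤ inn a ∨ fin' a + 2 ≤ b then some b
  else none

/-- The track sequence of `b` through a list of tower words. -/
def trackSeq : ℕ → List (List ℕ) → List ℕ
  | b, [] => [b]
  | b, a :: rest =>
    match trackStep a b with
    | none => [b]
    | some b' => b :: trackSeq b' rest

/-- The tower decomposition of a word, as a function. -/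
def towerDecomp : List ℕ → List (List ℕ)
  | [] => []
  | x :: xs =>
    match towerDecomp xs with
    | [] => [[x]]
    | t :: ts => if t.headI = x + 1 then (x :: t) :: ts else [x] :: t :: ts

lemma toPerm_cons (x : ℕ) (l : List ℕ) : toPerm (x :: l) = sGen x * toPerm l := by
  simp [toPerm]

lemma toPerm_append (u v : List ℕ) : toPerm (u ++ v) = toPerm u * toPerm v := by
  simp [toPerm]

lemma toPerm_range'_apply (m : ℕ) : ∀ h n : ℕ,
    toPerm (List.range' h m) n =
      if n = h + m then h else if h ≤ n ∧ n < h + m then n + 1 else n := by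
  induction m with
  | zero =>
    intro h n
    simp only [List.range', toPerm, List.map_nil, List.prod_nil, Equiv.Perm.one_apply]
    split_ifs <;> omega
  | succ m ih =>
    intro h n
    rw [List.range'_succ, toPerm_cons, Equiv.Perm.mul_apply, ih (h + 1) n]
    simp only [sGen, Equiv.swap_apply_def]
    split_ifs <;> omega

lemma tower_eq_range' : ∀ a : List ℕ, IsTowerWord a → a = List.range' a.headI a.length := by
  intro a
  induction a with
  | nil => intro h; exact absurd rfl h.1
  | cons x t ih =>
    intro h
    cases t with
    | nil => simp [List.range']
    | cons y s =>
      have hc := h.2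
      rw [List.Chain', List.isChain_cons_cons] at hc
      have ht : IsTowerWord (y :: s) := ⟨by simp, hc.2⟩
      have h3 := ih ht
      simp only [List.headI, List.length_cons] at h3
      simp only [List.headI, List.length_cons, List.range'_succ]
      rw [← hc.1]
      exact congrArg (x :: ·) h3

lemma fin'_tower : ∀ a : List ℕ, IsTowerWord a → fin' a = inn a + a.length - 1 := by
  intro a
  induction a with
  | nil => intro h; exact absurd rfl h.1
  | cons x t ih =>
    intro h
    cases t with
    | nil => simp [fin', inn]
    | cons y s =>
      have hc := h.2
      rw [List.Chain', List.isChain_cons_cons] at hc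
      have := ih ⟨by simp, hc.2⟩
      simp only [fin', inn, List.getLastD_cons, List.headI, List.length_cons] at this ⊢
      omega

lemma pass_perm_range (h0 m b b' : ℕ) (hm : 1 ≤ m)
    (hc : (h0 < b ∧ b ≤ h0 + m - 1 ∧ b' = b - 1) ∨
      ((b + 2 ≤ h0 ∨ h0 + m + 1 ≤ b) ∧ b' = b)) :
    sGen b * toPerm (List.range' h0 m) = toPerm (List.range' h0 m) * sGen b' := by
  ext n
  simp only [Equiv.Perm.mul_apply, toPerm_range'_apply]
  simp only [sGen, Equiv.swap_apply_def, toPerm_range'_apply]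
  rcases hc with ⟨h1, h2, h3⟩ | ⟨h1, h2⟩
  · subst h3; split_ifs <;> omega
  · subst h2; split_ifs <;> omega

lemma pass_perm (a : List ℕ) (ha : IsTowerWord a) (b b' : ℕ)
    (h : trackStep a b = some b') : sGen b * toPerm a = toPerm a * sGen b' := by
  have hne : a ≠ [] := ha.1
  have hlen : 1 ≤ a.length := List.length_pos_iff.2 hne
  have hfin := fin'_tower a ha
  have hrng := tower_eq_range' a ha
  have hinn : inn a = a.headI := rfl
  unfold trackStep at h
  rw [hrng]
  apply pass_perm_range a.headI a.length b b' hlen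
  split_ifs at h with h1 h2
  · rw [Option.some.injEq] at h
    rw [hfin, hinn] at h1
    left; omega
  · rw [Option.some.injEq] at h
    rw [hfin, hinn] at h2
    right; omega

lemma track_perm : ∀ (L : List (List ℕ)), (∀ a ∈ L, IsTowerWord a) → ∀ (b : ℕ),
    ∀ i < (trackSeq b L).length,
      toPerm ((L.take i).flatten ++ (trackSeq b L).getD i 0 :: (L.drop i).flatten)
        = toPerm (b :: L.flatten) := by
  intro L
  induction L with
  | nil =>
    intro _ b i hi
    simp only [trackSeq, List.length_cons, List.length_nil] at hi
    interval_cases i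
    simp [trackSeq]
  | cons a rest ih =>
    intro hL b i hi
    have ha : IsTowerWord a := hL a (by simp)
    have hrest : ∀ x ∈ rest, IsTowerWord x := fun x hx => hL x (by simp [hx])
    have hts : ∀ o, trackStep a b = o → trackSeq b (a :: rest) =
        (match o with | none => [b] | some b' => b :: trackSeq b' rest) := by
      intro o ho; rw [← ho]; rfl
    cases htr : trackStep a b with
    | none =>
      rw [hts none htr] at hi ⊢
      simp only [List.length_cons, List.length_nil] at hi
      interval_cases i
      simp
    | some b' =>
      rw [hts (some b') htr] at hi ⊢
      cases i with
      | zero => simp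
      | succ j =>
        simp only [List.length_cons, Nat.succ_lt_succ_iff] at hi
        have key := ih hrest b' j hi
        simp only [List.take_succ_cons, List.drop_succ_cons, List.flatten_cons,
          List.getD_cons_succ, List.append_assoc]
        rw [toPerm_append, key, toPerm_cons, toPerm_cons, toPerm_append,
          ← mul_assoc, ← pass_perm a ha b b' htr, mul_assoc]

lemma passage_length (L : List (List ℕ)) (i : ℕ) (c : ℕ) :
    ((L.take i).flatten ++ c :: (L.drop i).flatten).length = L.flatten.length + 1 := by
  have : (L.take i).flatten ++ (L.drop i).flatten = ((L.take i) ++ (L.drop i)).flatten := by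
    rw [List.flatten_append]
  rw [List.length_append, List.length_cons]
  have h2 : (L.take i).flatten.length + (L.drop i).flatten.length = L.flatten.length := by
    rw [← List.length_append, this, List.take_append_drop]
  omega

/-- every passage word of a letter `b` through a reduced word α
(given by its track sequence) is a reduced word representing the same permutation
as `b α`. -/
theorem passwords_reduced (ω : Equiv.Perm ℕ) (α : List ℕ) (b : ℕ)
    (L : List (List ℕ)) (hd : IsTowerDecomp α L)
    (hred : IsReducedWordOf (b :: α) ω) :
    ∀ i, i < (trackSeq b L).length →
      IsReducedWordOf
        ((L.take i).flatten ++ (trackSeq b L).getD i 0 :: (L.drop i).flatten) ω := by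
  intro i hi
  obtain ⟨hflat, htw, _⟩ := hd
  have hperm := track_perm L htw b i hi
  rw [hflat] at hperm
  constructor
  · rw [hperm, hred.1]
  · intro v hv
    have := hred.2 v hv
    rw [passage_length]
    rw [hflat]
    simpa using this
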